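/- Let p be a prime with p ≡ 3 (mod 32). Then the polynomial X^2 - (1+τ+τ^2)((1+τ+τ^2)^2 + p)((1+τ+τ^2)^2 + 2p) has a root in ℚ₂(√2); equivalently, f(1+√2+2) is a square in ℚ₂(√2), where f(x) = x(x^2+p)(x^2+2p) and √2 denotes a square root of 2 in ℚ₂(√2). -/

import Mathlib

open Polynomial

theorem sqrt_exists (c : ℤ_[2]) (h : (8:ℤ_[2]) ∣ (c-1)) :
    ∃ w : ℤ_[2], w^2 = c ∧ (4:ℤ_[2]) ∣ (w-1) := by
  have hd : (X^2 - C c : ℤ_[2][X]).derivative = C 2 * X := by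
    simp [derivative_pow]
  have h8 : ‖c - 1‖ ≤ ((2:ℕ):ℝ)^(-(3:ℕ):ℤ) := by
    rw [PadicInt.norm_le_pow_iff_mem_span_pow, Ideal.mem_span_singleton]
    convert h using 1; norm_num
  obtain ⟨z, hz, hdist, -, -⟩ := hensels_lemma (F := X^2 - C c) (a := 1) (by
    simp only [hd, map_sub, map_pow, aeval_X, aeval_C, map_mul, Algebra.algebraMap_self, RingHom.id_apply, eval_mul, eval_C, eval_X, eval_sub, eval_pow, one_pow, mul_one]
    calc ‖(1:ℤ_[2]) - c‖ = ‖c - 1‖ := by rw [norm_sub_rev]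
      _ ≤ ((2:ℕ):ℝ)^(-(3:ℕ):ℤ) := h8
      _ < ‖(2:ℤ_[2])‖^2 := by
          have h2 : ‖(2:ℤ_[2])‖ = 1/2 := by
            simpa using PadicInt.norm_p (p := 2)
          rw [h2]; norm_num)
  refine ⟨z, ?_, ?_⟩
  · simpa [sub_eq_zero] using hz
  · rw [hd] at hdist
    simp only [map_mul, aeval_C, aeval_X, Algebra.algebraMap_self, RingHom.id_apply, eval_mul, eval_C, eval_X, one_pow, mul_one] at hdist
    have h2 : ‖(2:ℤ_[2])‖ = ((2:ℕ):ℝ)^(-(1:ℤ)) := by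
      simpa using PadicInt.norm_p (p := 2)
    rw [h2] at hdist
    have hle : ‖z - 1‖ ≤ ((2:ℕ):ℝ)^(-(2:ℕ):ℤ) := by
      rw [PadicInt.norm_le_pow_iff_norm_lt_pow_add_one]
      norm_num; convert hdist using 2; norm_num
    rw [PadicInt.norm_le_pow_iff_mem_span_pow, Ideal.mem_span_singleton] at hle
    convert hle using 1; norm_num

/-- For a prime `p ≡ 3 (mod 32)`, the element `f(1+τ+τ²)` is a square in
`ℚ₂(√2) = ℚ₂[τ]/(τ² - 2)`, where `f(x) = x(x²+p)(x²+2p)`. -/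
theorem f_one_add_sqrt_two_isSquare (p : ℕ) (hp : p.Prime) (hmod : p % 32 = 3) :
    ∀ t : AdjoinRoot ((X : Polynomial ℚ_[2]) ^ 2 - C 2),
      t = 1 + AdjoinRoot.root ((X : Polynomial ℚ_[2]) ^ 2 - C 2) +
          AdjoinRoot.root ((X : Polynomial ℚ_[2]) ^ 2 - C 2) ^ 2 →
      IsSquare (t * (t ^ 2 + (p : AdjoinRoot ((X : Polynomial ℚ_[2]) ^ 2 - C 2))) *
        (t ^ 2 + 2 * (p : AdjoinRoot ((X : Polynomial ℚ_[2]) ^ 2 - C 2)))) := by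
  intro t ht
  obtain ⟨k, hk⟩ : ∃ k, p = 32*k + 3 := ⟨p/32, by omega⟩
  -- work in ℤ_[2]
  set kz : ℤ_[2] := (k : ℤ_[2]) with hkz
  set r : ℤ_[2] := 735 + 12694*kz + 73276*kz^2 + 161280*kz^3 + 114688*kz^4 with hr
  set c : ℤ_[2] := (651+2736*kz+3072*kz^2)^2 - 8*(217+792*kz+512*kz^2)^2 with hcdef
  have hc : c = 49 + 32*kz + 64*r := by rw [hcdef, hr]; ring
  have h8 : (8:ℤ_[2]) ∣ c - 1 := ⟨6+4*kz+8*r, by linear_combination hc⟩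
  obtain ⟨w, hw2, hw4⟩ := sqrt_exists c h8
  obtain ⟨a, ha⟩ := hw4
  have hp2 : Prime (2:ℤ_[2]) := by
    have := PadicInt.prime_p (p := 2); simpa using this
  have h8ne : (8:ℤ_[2]) ≠ 0 := by norm_num
  have h2ne : (2:ℤ_[2]) ≠ 0 := by norm_num
  have h16 : (8:ℤ_[2])*(a*(1+2*a)) = 8*(2*(3+2*kz+4*r)) := by
    linear_combination hw2 + hc - (w+1+4*a)*ha
  have hmul : a*(1+2*a) = 2*(3+2*kz+4*r) := mul_left_cancel₀ h8ne h16
  have h2a : (2:ℤ_[2]) ∣ a := by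
    rcases hp2.dvd_mul.mp ⟨3+2*kz+4*r, hmul⟩ with h | h
    · exact h
    · exfalso
      obtain ⟨x, hx⟩ := h
      exact hp2.not_unit (isUnit_of_dvd_one ⟨x - a, by linear_combination hx⟩)
  obtain ⟨b, hb⟩ := h2a
  have hbkey : b + 4*b^2 = 3 + 2*kz + 4*r := by
    have h2' : (2:ℤ_[2])*(b + 4*b^2) = 2*(3 + 2*kz + 4*r) := by
      linear_combination hmul - (1+2*a+4*b)*hb
    exact mul_left_cancel₀ h2ne h2'
  obtain ⟨rp, hrp2, -⟩ := sqrt_exists (163+684*kz+768*kz^2+2*b)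
    ⟨21+86*kz+96*kz^2+r-b^2, by linear_combination 2*hbkey⟩
  obtain ⟨v0, hv02, -⟩ := sqrt_exists (325+1368*kz+1536*kz^2-4*b)
    ⟨39+170*kz+192*kz^2-2*r+2*b^2, by linear_combination (-4)*hbkey⟩
  set u : ℤ_[2] := 2*rp with hu
  have E1 : u^2 + 2*v0^2 = 2*(651+2736*kz+3072*kz^2) := by
    rw [hu]; linear_combination 4*hrp2 + 2*hv02
  have E2sq : (u*v0)^2 = (2*(217+792*kz+512*kz^2))^2 := by
    rw [hu]
    linear_combination (4*v0^2)*hrp2 + (4*(163+684*kz+768*kz^2+2*b))*hv02 - 8*hbkey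
  have hcases : (u*v0 - 2*(217+792*kz+512*kz^2))*(u*v0 + 2*(217+792*kz+512*kz^2)) = 0 := by
    linear_combination E2sq
  have hV : ∃ v : ℤ_[2], v^2 = v0^2 ∧ u*v = 2*(217+792*kz+512*kz^2) := by
    rcases mul_eq_zero.mp hcases with h | h
    · exact ⟨v0, rfl, by linear_combination h⟩
    · exact ⟨-v0, by ring, by linear_combination -h⟩
  obtain ⟨v, hvv, hE2⟩ := hV
  have E1' : u^2 + 2*v^2 = 2*(651+2736*kz+3072*kz^2) := by rw [hvv]; exact E1
  -- move to K
  set K := AdjoinRoot ((X : Polynomial ℚ_[2]) ^ 2 - C 2) with hK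
  set τ : K := AdjoinRoot.root ((X : Polynomial ℚ_[2]) ^ 2 - C 2) with hτ
  have hτ2 : τ^2 = 2 := by
    have h0 := AdjoinRoot.eval₂_root ((X : Polynomial ℚ_[2]) ^ 2 - C 2)
    simp only [eval₂_sub, eval₂_pow, eval₂_X, eval₂_C, sub_eq_zero] at h0
    rw [hτ, h0]; exact map_ofNat _ 2
  set φ : ℤ_[2] →+* K := (algebraMap ℚ_[2] K).comp (PadicInt.Coe.ringHom) with hφ
  have E1K := congrArg φ E1'
  have E2K := congrArg φ hE2
  simp only [map_add, map_mul, map_pow, map_ofNat, map_natCast, map_one] at E1K E2K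
  simp only [hkz, map_natCast] at E1K E2K
  have hpK : (p : K) = 32*(k:K) + 3 := by rw [hk, Nat.cast_add, Nat.cast_mul]; push_cast; ring
  refine ⟨φ u + φ v * τ, ?_⟩
  rw [ht, hpK]
  linear_combination (-1)*E1K - 2*τ*E2K +
    (637 + 2496*(k:K) + 2048*(k:K)^2 + 409*τ + 1248*(k:K)*τ + 275*τ^2 + 768*(k:K)*τ^2 +
     158*τ^3 + 288*(k:K)*τ^3 + 88*τ^4 + 96*(k:K)*τ^4 + 40*τ^5 + 17*τ^6 + 5*τ^7 + τ^8
     - (φ v)^2)*hτ2
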